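/- Let Λ be a countable finitely aligned category of paths, v a vertex, and Δ ⊆ vΛ a finite subset. Then Δ is exhaustive if and only if v∂Λ ⊆ ⋃_{α∈Δ} {C ∈ vΛ* : α ∈ C}. -/

import Mathlib

universe u v

/-- A category of paths: a small category (objects identified with identity
morphisms) with left and right cancellation and no inverses. -/
structure CategoryOfPaths (Λ : Type u) where
  s : Λ → Λ
  r : Λ → Λ
  comp : Λ → Λ → Λ
  s_comp : ∀ {α β : Λ}, s α = r β → s (comp α β) = s β
  r_comp : ∀ {α β : Λ}, s α = r β → r (comp α β) = r α
  comp_assoc : ∀ {α β γ : Λ}, s α = r β → s β = r γ →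
    comp (comp α β) γ = comp α (comp β γ)
  id_comp : ∀ α : Λ, comp (r α) α = α
  comp_id : ∀ α : Λ, comp α (s α) = α
  s_r : ∀ α : Λ, s (r α) = r α
  r_r : ∀ α : Λ, r (r α) = r α
  r_s : ∀ α : Λ, r (s α) = s α
  s_s : ∀ α : Λ, s (s α) = s α
  left_cancel : ∀ {α β γ : Λ}, s α = r β → s α = r γ → comp α β = comp α γ → β = γ
  right_cancel : ∀ {β γ α : Λ}, s β = r α → s γ = r α → comp β α = comp γ α → β = γ
  no_inverses : ∀ {α β : Λ}, s α = r β → comp α β = s β → α = s β ∧ β = s β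

variable {Λ : Type u}

/-- The tail set `αΛ`. -/
def pTail (C : CategoryOfPaths Λ) (α : Λ) : Set Λ :=
  {x | ∃ β, C.s α = C.r β ∧ x = C.comp α β}

/-- `vΛ`, the paths with range `v`. -/
def pRng (C : CategoryOfPaths Λ) (w : Λ) : Set Λ := {α | C.r α = w}

/-- `Λv`, the paths with source `v`. -/
def pSrc (C : CategoryOfPaths Λ) (w : Λ) : Set Λ := {α | C.s α = w}

/-- `[β]`, the initial segments of `β`. -/
def pSeg (C : CategoryOfPaths Λ) (β : Λ) : Set Λ := {α | β ∈ pTail C α}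

/-- `α ⋔ β`. -/
def pMeets (C : CategoryOfPaths Λ) (α β : Λ) : Prop :=
  (pTail C α ∩ pTail C β).Nonempty

/-- `αE`. -/
def pMulSet (C : CategoryOfPaths Λ) (α : Λ) (E : Set Λ) : Set Λ :=
  {x | ∃ β ∈ E, C.s α = C.r β ∧ x = C.comp α β}

/-- `σ^α(E ∩ αΛ)`, computed inside an ambient subcategory `S`. -/
def pShiftIn (C : CategoryOfPaths Λ) (S : Set Λ) (α : Λ) (E : Set Λ) : Set Λ :=
  {β | β ∈ S ∧ C.s α = C.r β ∧ C.comp α β ∈ E}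

/-- `σ^α(E ∩ αΛ)`. -/
def pShift (C : CategoryOfPaths Λ) (α : Λ) (E : Set Λ) : Set Λ :=
  {β | C.s α = C.r β ∧ C.comp α β ∈ E}

/-- `⋁F`: the minimal common extensions of `F`. -/
def pMinExt (C : CategoryOfPaths Λ) (F : Set Λ) : Set Λ :=
  {ε | (∀ α ∈ F, ε ∈ pTail C α) ∧
    ∀ γ, (∀ α ∈ F, γ ∈ pTail C α) → ε ∈ pTail C γ → γ = ε}

/-- `α ∨ β`: the minimal common extensions of `α` and `β`. -/
def pMinCE (C : CategoryOfPaths Λ) (α β : Λ) : Set Λ := pMinExt C {α, β}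

/-- A subcategory of a category of paths, as a set of morphisms. -/
structure IsSubcategory (C : CategoryOfPaths Λ) (Λ₀ : Set Λ) : Prop where
  comp_mem : ∀ {α β : Λ}, α ∈ Λ₀ → β ∈ Λ₀ → C.s α = C.r β → C.comp α β ∈ Λ₀
  s_mem : ∀ {α : Λ}, α ∈ Λ₀ → C.s α ∈ Λ₀
  r_mem : ∀ {α : Λ}, α ∈ Λ₀ → C.r α ∈ Λ₀

/-- A finitely aligned category of paths. -/
def FinitelyAligned (C : CategoryOfPaths Λ) : Prop :=
  ∀ α β : Λ, ∃ G : Set Λ, G.Finite ∧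
    pTail C α ∩ pTail C β = ⋃ ε ∈ G, pTail C ε

/-- A finitely aligned relative category of paths `(Λ₀, Λ)`. -/
def RelFinitelyAligned (C : CategoryOfPaths Λ) (Λ₀ : Set Λ) : Prop :=
  (∀ α ∈ Λ₀, ∀ β ∈ Λ₀, ∃ G : Set Λ, G.Finite ∧ G ⊆ Λ₀ ∧
      pTail C α ∩ pTail C β = ⋃ ε ∈ G, pTail C ε) ∧
  (∀ α ∈ Λ₀, pTail C α ∩ Λ₀ = pMulSet C α Λ₀)

/-- A ring of sets: contains `∅` and is closed under `∪`, `∩`, and `\`. -/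
def IsSetRing {γ : Type v} (R : Set (Set γ)) : Prop :=
  ∅ ∈ R ∧ (∀ E ∈ R, ∀ F ∈ R, E ∪ F ∈ R) ∧ (∀ E ∈ R, ∀ F ∈ R, E ∩ F ∈ R) ∧
    (∀ E ∈ R, ∀ F ∈ R, E \ F ∈ R)

/-- A ring of sets on `S`: a ring of sets all of whose members are subsets of `S`. -/
def IsSetRingOn {γ : Type v} (S : Set γ) (R : Set (Set γ)) : Prop :=
  IsSetRing R ∧ ∀ E ∈ R, E ⊆ S

/-- The ring of sets generated by a collection. -/
def setRingGen {γ : Type v} (G : Set (Set γ)) : Set (Set γ) :=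
  ⋂₀ {R | IsSetRing R ∧ G ⊆ R}

/-- The ring of sets on `S` generated by a collection. -/
def setRingGenOn {γ : Type v} (S : Set γ) (G : Set (Set γ)) : Set (Set γ) :=
  ⋂₀ {R | IsSetRingOn S R ∧ G ⊆ R}

/-- A zigzag: a list of pairs `(αᵢ, βᵢ)` with `r αᵢ = r βᵢ` and `s αᵢ₊₁ = s βᵢ`. -/
def IsZigzag (C : CategoryOfPaths Λ) (l : List (Λ × Λ)) : Prop :=
  (∀ p ∈ l, C.r p.1 = C.r p.2) ∧ l.Chain' (fun p q => C.s q.1 = C.s p.2)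

/-- The (graph of the) zigzag map `φ_ζ = σ^{α₁} β₁ ⋯ σ^{αₙ} βₙ`, computed
inside an ambient subcategory `S`. -/
def zigzagRelIn (C : CategoryOfPaths Λ) (S : Set Λ) : List (Λ × Λ) → Λ → Λ → Prop
  | [], x, y => x = y ∧ x ∈ S
  | p :: rest, x, y => ∃ z, zigzagRelIn C S rest x z ∧ C.s p.2 = C.r z ∧
      C.s p.1 = C.r y ∧ y ∈ S ∧ C.comp p.2 z = C.comp p.1 y

/-- `A(ζ)`: the domain of the zigzag map. -/
def zigzagDomIn (C : CategoryOfPaths Λ) (S : Set Λ) (l : List (Λ × Λ)) : Set Λ :=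
  {x | ∃ y, zigzagRelIn C S l x y}

/-- `𝒟(Λ₀,Λ)⁰_v`: nonempty zigzag sets with entries in `Λ₀` and source `v`,
computed inside the ambient subcategory `S`. -/
def relD0 (C : CategoryOfPaths Λ) (Λ₀ S : Set Λ) (w : Λ) : Set (Set Λ) :=
  {E | E.Nonempty ∧ ∃ (l : List (Λ × Λ)) (h : l ≠ []),
    IsZigzag C l ∧ (∀ p ∈ l, p.1 ∈ Λ₀ ∧ p.2 ∈ Λ₀) ∧
    C.s (l.getLast h).2 = w ∧ E = zigzagDomIn C S l}

/-- `𝒜(Λ₀,Λ)_v`: the ring of sets generated by the zigzag sets. -/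
def relAring (C : CategoryOfPaths Λ) (Λ₀ S : Set Λ) (w : Λ) : Set (Set Λ) :=
  setRingGenOn {α | α ∈ S ∧ C.r α = w} (relD0 C Λ₀ S w)

/-- A filter in a ring of sets. -/
def IsFilterIn {γ : Type v} (R U : Set (Set γ)) : Prop :=
  U.Nonempty ∧ U ⊆ R ∧ (∀ E ∈ U, E.Nonempty) ∧
    (∀ E ∈ U, ∀ F ∈ U, E ∩ F ∈ U) ∧ (∀ E ∈ U, ∀ F ∈ R, E ⊆ F → F ∈ U)

/-- An ultrafilter in a ring of sets: a maximal filter. -/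
def IsUltrafilterIn {γ : Type v} (R U : Set (Set γ)) : Prop :=
  IsFilterIn R U ∧ ∀ V, IsFilterIn R V → U ⊆ V → V = U

/-- A filter base in a ring of sets. -/
def IsFilterBaseIn {γ : Type v} (R B : Set (Set γ)) : Prop :=
  B.Nonempty ∧ B ⊆ R ∧ (∀ E ∈ B, E.Nonempty) ∧
    ∀ E ∈ B, ∀ F ∈ B, ∃ G ∈ B, G ⊆ E ∩ F

/-- The filter generated by a filter base. -/
def filterGenBy {γ : Type v} (R B : Set (Set γ)) : Set (Set γ) :=
  {E | E ∈ R ∧ ∃ F ∈ B, F ⊆ E}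

/-- An ultrafilter base in a ring of sets. -/
def IsUltrafilterBaseIn {γ : Type v} (R B : Set (Set γ)) : Prop :=
  IsFilterBaseIn R B ∧ IsUltrafilterIn R (filterGenBy R B)

/-- A Boolean ring homomorphism defined on a ring of sets `A` with values in a
generalized Boolean algebra. -/
def IsBRHomOn {γ : Type v} {R : Type*} [GeneralizedBooleanAlgebra R]
    (A : Set (Set γ)) (ν : Set γ → R) : Prop :=
  ν ∅ = ⊥ ∧ (∀ E ∈ A, ∀ F ∈ A, ν (E ∪ F) = ν E ⊔ ν F) ∧
    (∀ E ∈ A, ∀ F ∈ A, ν (E ∩ F) = ν E ⊓ ν F) ∧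
    (∀ E ∈ A, ∀ F ∈ A, ν (E \ F) = ν E \ ν F)

/-- `𝒜_v`: the ring of sets on `vΛ` generated by the tail sets. -/
def tailRing (C : CategoryOfPaths Λ) (w : Λ) : Set (Set Λ) :=
  setRingGenOn (pRng C w) {E | ∃ α, C.r α = w ∧ E = pTail C α}

/-- A directed subset. -/
def pDirected (C : CategoryOfPaths Λ) (x : Set Λ) : Prop :=
  ∀ α ∈ x, ∀ β ∈ x, (pTail C α ∩ pTail C β ∩ x).Nonempty

/-- A hereditary subset. -/
def pHereditary (C : CategoryOfPaths Λ) (x : Set Λ) : Prop :=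
  ∀ γ ∈ x, ∀ α : Λ, γ ∈ pTail C α → α ∈ x

/-- `vΛ*`: the nonempty directed hereditary subsets of `vΛ`. -/
def lamStar (C : CategoryOfPaths Λ) (w : Λ) : Set (Set Λ) :=
  {x | x.Nonempty ∧ x ⊆ pRng C w ∧ pDirected C x ∧ pHereditary C x}

/-- `vΛ**`: the maximal directed subsets of `vΛ`. -/
def lamStarStar (C : CategoryOfPaths Λ) (w : Λ) : Set (Set Λ) :=
  {x | x ⊆ pRng C w ∧ pDirected C x ∧
    ∀ y, y ⊆ pRng C w → pDirected C y → x ⊆ y → y = x}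

/-- `αx = ⋃_{γ ∈ x} [αγ]` for `x ∈ s(α)Λ*`. -/
def pMulStar (C : CategoryOfPaths Λ) (α : Λ) (x : Set Λ) : Set Λ :=
  {δ | ∃ γ ∈ x, C.s α = C.r γ ∧ C.comp α γ ∈ pTail C δ}

/-- `𝒰_{C,0}`. -/
def UC0 (C : CategoryOfPaths Λ) (w : Λ) (x : Set Λ) : Set (Set Λ) :=
  {E | E ∈ tailRing C w ∧ ∃ α ∈ x, pTail C α ⊆ E}

/-- `𝒰_C`. -/
def UC (C : CategoryOfPaths Λ) (w : Λ) (x : Set Λ) : Set (Set Λ) :=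
  {E | E ∈ tailRing C w ∧ ∃ α ∈ x, x ∩ pTail C α ⊆ E}

/-- `X_v = vΛ*` as a type. -/
abbrev Xv (C : CategoryOfPaths Λ) (w : Λ) : Type u := {x : Set Λ // x ∈ lamStar C w}

/-- The topology on `X_v` generated by the sets `Ê`, `E ∈ 𝒜_v`. -/
def XvTop (C : CategoryOfPaths Λ) (w : Λ) : TopologicalSpace (Xv C w) :=
  TopologicalSpace.generateFrom
    {t | ∃ E ∈ tailRing C w, t = {x : Xv C w | E ∈ UC C w x.1}}

/-- The vertices of `Λ`. -/
abbrev Vertex (C : CategoryOfPaths Λ) : Type u := {w : Λ // C.r w = w}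

/-- `X`: the disjoint union of the spaces `X_v`. -/
abbrev Xtotal (C : CategoryOfPaths Λ) : Type u := Σ w : Vertex C, Xv C w.1

/-- The disjoint union topology on `X`. -/
def XtotalTop (C : CategoryOfPaths Λ) : TopologicalSpace (Xtotal C) :=
  letI : ∀ w : Vertex C, TopologicalSpace (Xv C w.1) := fun w => XvTop C w.1
  inferInstance

/-- The boundary `∂Λ`: the closure of `Λ**` in `X`. -/
def boundarySet (C : CategoryOfPaths Λ) : Set (Xtotal C) :=
  @closure _ (XtotalTop C) {p : Xtotal C | p.2.1 ∈ lamStarStar C p.1.1}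

/-- An exhaustive subset of `vΛ`. -/
def ExhaustiveAt (C : CategoryOfPaths Λ) (w : Λ) (F : Set Λ) : Prop :=
  ∀ α, C.r α = w → ∃ β ∈ F, pMeets C α β

/-- An aperiodic point of `Λ*`. -/
def pAperiodic (C : CategoryOfPaths Λ) (x : Set Λ) : Prop :=
  ∀ α ∈ x, ∀ β ∈ x, α ≠ β → pShift C α x ≠ pShift C β x

/-- A right-aperiodic point of `wΛ*`. -/
def pRightAperiodicAt (C : CategoryOfPaths Λ) (w : Λ) (x : Set Λ) : Prop :=
  ∀ α β : Λ, C.s α = w → C.s β = w → α ≠ β → pMulStar C α x ≠ pMulStar C β x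

/-- The triples `(α, β, x)` with `s α = s β` and `x ∈ s(α)Λ*`. -/
abbrev pTrip (C : CategoryOfPaths Λ) : Type u :=
  {t : Λ × Λ × Set Λ // C.s t.1 = C.s t.2.1 ∧ t.2.2 ∈ lamStar C (C.s t.1)}

/-- The groupoid equivalence relation on triples. -/
def tripRel (C : CategoryOfPaths Λ) (t t' : pTrip C) : Prop :=
  ∃ (z : Set Λ) (δ δ' : Λ),
    z ∈ lamStar C (C.s δ) ∧ z ∈ lamStar C (C.s δ') ∧
    C.s t.1.1 = C.r δ ∧ C.s t'.1.1 = C.r δ' ∧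
    t.1.2.2 = pMulStar C δ z ∧ t'.1.2.2 = pMulStar C δ' z ∧
    C.comp t.1.1 δ = C.comp t'.1.1 δ' ∧
    C.comp t.1.2.1 δ = C.comp t'.1.2.1 δ'

/-- The ultrafilter space of `𝒜(Λ₀,Λ)_v`. -/
abbrev relXv (C : CategoryOfPaths Λ) (Λ₀ : Set Λ) (w : Λ) : Type u :=
  {U : Set (Set Λ) // IsUltrafilterIn (relAring C Λ₀ Set.univ w) U}

/-- The topology on the ultrafilter space of `𝒜(Λ₀,Λ)_v` generated by the `Ê`. -/
def relXvTop (C : CategoryOfPaths Λ) (Λ₀ : Set Λ) (w : Λ) :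
    TopologicalSpace (relXv C Λ₀ w) :=
  TopologicalSpace.generateFrom
    {t | ∃ E ∈ relAring C Λ₀ Set.univ w, t = {U : relXv C Λ₀ w | E ∈ U.1}}


section Aux14

variable {Λ : Type u} (C : CategoryOfPaths Λ)

lemma mem_pTail_self (α : Λ) : α ∈ pTail C α :=
  ⟨C.s α, (C.r_s α).symm, (C.comp_id α).symm⟩

lemma pTail_trans {α β γ : Λ} (h1 : β ∈ pTail C α) (h2 : γ ∈ pTail C β) :
    γ ∈ pTail C α := by
  obtain ⟨b, hb, rfl⟩ := h1
  obtain ⟨c, hc, rfl⟩ := h2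
  have hbc : C.s b = C.r c := by rw [← C.s_comp hb]; exact hc
  exact ⟨C.comp b c, by rw [C.r_comp hbc]; exact hb, (C.comp_assoc hb hbc)⟩

lemma r_of_pTail {α β : Λ} (h : β ∈ pTail C α) : C.r β = C.r α := by
  obtain ⟨b, hb, rfl⟩ := h
  exact C.r_comp hb

/-- Common upper bounds of finite subsets of directed sets. -/
lemma directed_bound {y : Set Λ} (hd : pDirected C y) (hne : y.Nonempty)
    {F : Set Λ} (hF : F.Finite) (hFy : F ⊆ y) :
    ∃ d ∈ y, ∀ a ∈ F, d ∈ pTail C a := by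
  revert hFy
  refine Set.Finite.induction_on
    (motive := fun F _ => F ⊆ y → ∃ d ∈ y, ∀ a ∈ F, d ∈ pTail C a) F hF ?_ ?_
  · intro _
    obtain ⟨d, hd'⟩ := hne
    exact ⟨d, hd', fun a ha => absurd ha (Set.notMem_empty a)⟩
  · intro a s _ _ ih hsub
    obtain ⟨d, hdy, hdall⟩ := ih (fun b hb => hsub (Set.mem_insert_of_mem a hb))
    obtain ⟨e, he, hey⟩ := hd a (hsub (Set.mem_insert a s)) d hdy
    refine ⟨e, hey, fun b hb => ?_⟩
    rcases hb with rfl | hb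
    · exact he.1
    · exact pTail_trans C (hdall b hb) he.2

/-- Maximal directed sets are hereditary. -/
lemma hereditary_of_maximal {w : Λ} {y : Set Λ} (hy : y ∈ lamStarStar C w) :
    pHereditary C y := by
  obtain ⟨hsub, hdir, hmax⟩ := hy
  intro γ hγ α hγα
  have key : y ∪ {β | γ ∈ pTail C β} = y := by
    apply hmax
    · rintro b (hb | hb)
      · exact hsub hb
      · have := r_of_pTail C hb
        simpa [pRng, this] using hsub hγ
    · rintro a (ha | ha) b (hb | hb)
      · obtain ⟨e, he, hey⟩ := hdir a ha b hb
        exact ⟨e, he, Or.inl hey⟩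
      · obtain ⟨e, he, hey⟩ := hdir a ha γ hγ
        exact ⟨e, ⟨he.1, pTail_trans C hb he.2⟩, Or.inl hey⟩
      · obtain ⟨e, he, hey⟩ := hdir γ hγ b hb
        exact ⟨e, ⟨pTail_trans C ha he.1, he.2⟩, Or.inl hey⟩
      · exact ⟨γ, ⟨ha, hb⟩, Or.inl hγ⟩
    · exact Set.subset_union_left
  rw [← key]
  exact Or.inr hγα

/-- König's lemma for sequences of finite nonempty sets linked by extension. -/
lemma konig {G : ℕ → Set Λ} (hfin : ∀ n, (G n).Finite) (hne : ∀ n, (G n).Nonempty)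
    (hlink : ∀ n, ∀ x ∈ G (n + 1), ∃ y ∈ G n, x ∈ pTail C y) :
    ∃ ε : ℕ → Λ, (∀ n, ε n ∈ G n) ∧ ∀ n, ε (n + 1) ∈ pTail C (ε n) := by
  classical
  -- choice functions descending one level
  have hp : ∀ n (x : Λ), x ∈ G (n + 1) → ∃ y, y ∈ G n ∧ x ∈ pTail C y := by
    intro n x hx
    obtain ⟨y, hy, hxy⟩ := hlink n x hx
    exact ⟨y, hy, hxy⟩
  choose p hp1 hp2 using hp
  -- `descend n j` : an element of `G n` obtained by descending from level `n + j`
  let top : ∀ n, Λ := fun n => (hne n).choose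
  have htop : ∀ n, top n ∈ G n := fun n => (hne n).choose_spec
  let descend : ℕ → ℕ → Λ := fun n j =>
    Nat.rec (motive := fun _ => ∀ n, Λ) (fun n => top n)
      (fun _ ih n => if h : ih (n + 1) ∈ G (n + 1) then p n (ih (n + 1)) h else top n) j n
  have hdesc : ∀ j n, descend n j ∈ G n := by
    intro j
    induction j with
    | zero => exact fun n => htop n
    | succ j ih =>
      intro n
      show (if h : descend (n+1) j ∈ G (n + 1) then p n (descend (n+1) j) h else top n) ∈ G n
      rw [dif_pos (ih (n + 1))]
      exact hp1 n _ _
  have hdesclink : ∀ j n, descend (n + 1) j ∈ pTail C (descend n (j + 1)) := by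
    intro j n
    show descend (n+1) j ∈ pTail C
      (if h : descend (n+1) j ∈ G (n + 1) then p n (descend (n+1) j) h else top n)
    rw [dif_pos (hdesc j (n + 1))]
    exact hp2 n _ _
  -- chains indexed by their top level
  let c : ℕ → ℕ → Λ := fun m n => descend n (m - n)
  have hc : ∀ m n, n ≤ m → c m n ∈ G n := fun m n _ => hdesc (m - n) n
  have hclink : ∀ m n, n + 1 ≤ m → c m (n + 1) ∈ pTail C (c m n) := by
    intro m n h
    have hk : m - n = (m - (n + 1)) + 1 := by omega
    show c m (n + 1) ∈ pTail C (descend n (m - n))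
    rw [hk]
    exact hdesclink (m - (n + 1)) n
  -- the free ultrafilter on ℕ
  let U : Ultrafilter ℕ := Filter.hyperfilter ℕ
  have hcof : ∀ n : ℕ, {m : ℕ | n ≤ m} ∈ U := by
    intro n
    apply Filter.hyperfilter_le_cofinite
    simp only [Filter.mem_cofinite]
    have : {m : ℕ | n ≤ m}ᶜ = {m | m < n} := by ext m; simp [not_le]
    rw [this]
    exact Set.finite_lt_nat n
  have hval : ∀ n : ℕ, ∃ x ∈ G n, {m : ℕ | n ≤ m ∧ c m n = x} ∈ U := by
    intro n
    have hcover : (⋃ x ∈ G n, {m : ℕ | n ≤ m ∧ c m n = x}) ∈ U := by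
      have : {m : ℕ | n ≤ m} ⊆ ⋃ x ∈ G n, {m : ℕ | n ≤ m ∧ c m n = x} := by
        intro m hm
        exact Set.mem_biUnion (hc m n hm) ⟨hm, rfl⟩
      exact Filter.mem_of_superset (hcof n) this
    exact (Ultrafilter.finite_biUnion_mem_iff (hfin n)).mp hcover
  choose ε hε hεU using hval
  refine ⟨ε, hε, fun n => ?_⟩
  have hmem : ({m : ℕ | n ≤ m ∧ c m n = ε n} ∩ {m : ℕ | n + 1 ≤ m ∧ c m (n + 1) = ε (n + 1)}) ∈ U :=
    Filter.inter_mem (hεU n) (hεU (n + 1))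
  obtain ⟨m, hm1, hm2⟩ := Ultrafilter.nonempty_of_mem hmem
  rw [← hm1.2, ← hm2.2]
  exact hclink m n hm2.1

/-- generators of the tail ring -/
lemma pTail_mem_tailRing {w α : Λ} (h : C.r α = w) : pTail C α ∈ tailRing C w :=
  Set.mem_sInter.mpr fun _ hR => hR.2 ⟨α, h, rfl⟩

lemma tailRing_diff {w : Λ} {E F : Set Λ} (hE : E ∈ tailRing C w) (hF : F ∈ tailRing C w) :
    E \ F ∈ tailRing C w :=
  Set.mem_sInter.mpr fun R hR =>
    hR.1.1.2.2.2 E (Set.mem_sInter.mp hE R hR) F (Set.mem_sInter.mp hF R hR)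

lemma tailRing_diff_biUnion {w : Λ} {E : Set Λ} (hE : E ∈ tailRing C w) {s : Set Λ}
    (hs : s.Finite) (hsub : ∀ a ∈ s, C.r a = w) :
    E \ (⋃ a ∈ s, pTail C a) ∈ tailRing C w := by
  revert hsub
  refine Set.Finite.induction_on
    (motive := fun s _ => (∀ a ∈ s, C.r a = w) → E \ (⋃ a ∈ s, pTail C a) ∈ tailRing C w)
    s hs ?_ ?_
  · intro _
    simpa using hE
  · intro a s _ _ ih hsub
    have h1 : E \ (⋃ b ∈ insert a s, pTail C b)
        = (E \ (⋃ b ∈ s, pTail C b)) \ pTail C a := by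
      simp only [Set.biUnion_insert, Set.diff_diff]
      rw [Set.union_comm]
    rw [h1]
    exact tailRing_diff C (ih (fun b hb => hsub b (Set.mem_insert_of_mem a hb)))
      (pTail_mem_tailRing C (hsub a (Set.mem_insert a s)))

/-- The key lemma: a nonempty maximal directed set contains an element of every
finite exhaustive set. -/
lemma crux [Countable Λ] (hfa : FinitelyAligned C) {w : Λ} {Δ : Set Λ}
    (hfin : Δ.Finite) (hex : ExhaustiveAt C w Δ) {y : Set Λ}
    (hy : y ∈ lamStarStar C w) (hyne : y.Nonempty) :
    ∃ α ∈ Δ, ∃ d ∈ y, d ∈ pTail C α := by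
  classical
  obtain ⟨hysub, hydir, hymax⟩ := hy
  by_contra hcon
  push_neg at hcon
  -- Step 1: some α ∈ Δ meets every element of y
  have step1 : ∃ α ∈ Δ, ∀ d ∈ y, pMeets C d α := by
    by_contra h1
    push_neg at h1
    choose f hf1 hf2 using h1
    have hFfin : {d : Λ | ∃ α hα, f α hα = d}.Finite := hfin.dependent_image f
    have hFsub : {d : Λ | ∃ α hα, f α hα = d} ⊆ y := by
      rintro d ⟨α, hα, rfl⟩; exact hf1 α hα
    obtain ⟨d, hdy, hdall⟩ := directed_bound C hydir hyne hFfin hFsub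
    obtain ⟨β, hβΔ, e, he⟩ := hex d (hysub hdy)
    exact hf2 β hβΔ ⟨e, pTail_trans C (hdall _ ⟨β, hβΔ, rfl⟩) he.1, he.2⟩
  obtain ⟨α, hαΔ, hαmeet⟩ := step1
  -- Step 2: a cofinal chain in y
  obtain ⟨g, hgrange⟩ := (Set.to_countable y).exists_eq_range hyne
  have hg : ∀ n, g n ∈ y := fun n => hgrange ▸ Set.mem_range_self n
  let next : {d : Λ // d ∈ y} → ℕ → {d : Λ // d ∈ y} := fun d n =>
    ⟨(hydir d.1 d.2 (g n) (hg n)).choose, (hydir d.1 d.2 (g n) (hg n)).choose_spec.2⟩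
  have hnext : ∀ (d : {d : Λ // d ∈ y}) n,
      (next d n).1 ∈ pTail C d.1 ∧ (next d n).1 ∈ pTail C (g n) :=
    fun d n => (hydir d.1 d.2 (g n) (hg n)).choose_spec.1
  let δ : ℕ → {d : Λ // d ∈ y} := fun n =>
    Nat.rec ⟨g 0, hg 0⟩ (fun n d => next d (n + 1)) n
  have hδg : ∀ n, (δ n).1 ∈ pTail C (g n) := by
    intro n
    cases n with
    | zero => exact mem_pTail_self C (g 0)
    | succ n => exact (hnext (δ n) (n + 1)).2
  have hδlink : ∀ n, (δ (n + 1)).1 ∈ pTail C (δ n).1 := fun n => (hnext (δ n) (n + 1)).1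
  -- Step 3: the finite sets of minimal common extensions
  have hGex : ∀ n : ℕ, ∃ G : Set Λ, G.Finite ∧
      pTail C (δ n).1 ∩ pTail C α = ⋃ e ∈ G, pTail C e := fun n => hfa (δ n).1 α
  choose G Gfin hG using hGex
  have hGsub : ∀ n, ∀ e ∈ G n, e ∈ pTail C (δ n).1 ∩ pTail C α := by
    intro n e he
    have : e ∈ ⋃ e' ∈ G n, pTail C e' := Set.mem_biUnion he (mem_pTail_self C e)
    rw [← hG n] at this
    exact this
  have hGne : ∀ n, (G n).Nonempty := by
    intro n
    obtain ⟨e, he⟩ := hαmeet (δ n).1 (δ n).2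
    have : e ∈ ⋃ e' ∈ G n, pTail C e' := (hG n) ▸ he
    obtain ⟨e', he', -⟩ := Set.mem_iUnion₂.mp this
    exact ⟨e', he'⟩
  have hGlink : ∀ n, ∀ x ∈ G (n + 1), ∃ e ∈ G n, x ∈ pTail C e := by
    intro n x hx
    have hx2 := hGsub (n + 1) x hx
    have : x ∈ pTail C (δ n).1 ∩ pTail C α :=
      ⟨pTail_trans C (hδlink n) hx2.1, hx2.2⟩
    rw [hG n] at this
    obtain ⟨e, he, hxe⟩ := Set.mem_iUnion₂.mp this
    exact ⟨e, he, hxe⟩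
  -- Step 4: König
  obtain ⟨ε, hε, hεlink⟩ := konig C Gfin hGne hGlink
  have hεδ : ∀ n, ε n ∈ pTail C (δ n).1 := fun n => (hGsub n (ε n) (hε n)).1
  have hεα : ∀ n, ε n ∈ pTail C α := fun n => (hGsub n (ε n) (hε n)).2
  have hεmono : ∀ n m, n ≤ m → ε m ∈ pTail C (ε n) := by
    intro n m h
    induction m with
    | zero => cases Nat.le_zero.mp h; exact mem_pTail_self C (ε 0)
    | succ m ih =>
      rcases Nat.lt_or_ge n (m + 1) with h' | h'
      · exact pTail_trans C (ih (Nat.lt_succ_iff.mp h')) (hεlink m)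
      · have hnm : n = m + 1 := le_antisymm h h'
        rw [hnm]
        exact mem_pTail_self C (ε (m + 1))
  -- Step 5: the enlarged directed set
  set z : Set Λ := {η | ∃ n, ε n ∈ pTail C η} with hzdef
  have hry : ∀ n, C.r (ε n) = w := by
    intro n
    have h1 := r_of_pTail C (hεδ n)
    have h2 : C.r (δ n).1 = w := hysub (δ n).2
    rw [h1, h2]
  have hzsub : z ⊆ pRng C w := by
    rintro η ⟨n, hn⟩
    have := r_of_pTail C hn
    show C.r η = w
    rw [← this, hry n]
  have hzdir : pDirected C z := by
    rintro a ⟨n, hn⟩ b ⟨m, hm⟩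
    refine ⟨ε (max n m), ⟨pTail_trans C hn (hεmono n _ (le_max_left n m)),
      pTail_trans C hm (hεmono m _ (le_max_right n m))⟩, max n m, mem_pTail_self C _⟩
  have hyz : y ⊆ z := by
    intro η hη
    obtain ⟨n, rfl⟩ := hgrange ▸ hη
    exact ⟨n, pTail_trans C (hδg n) (hεδ n)⟩
  have hzy : z = y := hymax z hzsub hzdir hyz
  have hαy : α ∈ y := hzy ▸ ⟨0, hεα 0⟩
  exact hcon α hαΔ α hαy (mem_pTail_self C α)

end Aux14

/-- Lemma 8.1. A finite subset `Δ ⊆ vΛ` is exhaustive iff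
`v∂Λ ⊆ ⋃_{α ∈ Δ} {C ∈ vΛ* : α ∈ C}`. -/
theorem statement14 {Λ : Type u} [Countable Λ] (C : CategoryOfPaths Λ)
    (hfa : FinitelyAligned C) (v : Λ) (hv : C.r v = v)
    (Δ : Set Λ) (hΔ : Δ ⊆ pRng C v) (hfin : Δ.Finite) :
    ExhaustiveAt C v Δ ↔
      ∀ (x : Set Λ) (hx : x ∈ lamStar C v),
        (Sigma.mk (⟨v, hv⟩ : Vertex C) (⟨x, hx⟩ : Xv C v) : Xtotal C) ∈ boundarySet C →
        ∃ α ∈ Δ, α ∈ x := by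
  classical
  set M : Set (Xtotal C) := {p : Xtotal C | p.2.1 ∈ lamStarStar C p.1.1} with hMdef
  constructor
  · -- exhaustive ⇒ boundary covered
    intro hex x hx hbdx
    by_contra hno
    push_neg at hno
    obtain ⟨β, hβx⟩ := hx.1
    set E : Set Λ := pTail C β \ ⋃ a ∈ Δ, pTail C a with hEdef
    have hEring : E ∈ tailRing C v :=
      tailRing_diff_biUnion C (pTail_mem_tailRing C (hx.2.1 hβx)) hfin fun a ha => hΔ ha
    have hEUC : E ∈ UC C v x := by
      refine ⟨hEring, β, hβx, ?_⟩
      rintro e ⟨hex', heβ⟩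
      refine ⟨heβ, fun hmem => ?_⟩
      obtain ⟨a, haΔ, hea⟩ := Set.mem_iUnion₂.mp hmem
      exact hno a haΔ (hx.2.2.2 e hex' a hea)
    set B : Set (Xv C v) := {q : Xv C v | E ∈ UC C v q.1} with hBdef
    set O : Set (Xtotal C) := Sigma.mk (⟨v, hv⟩ : Vertex C) '' B with hOdef
    have hOopen : @IsOpen _
        (@instTopologicalSpaceSigma (Vertex C) (fun w => Xv C w.1)
          (fun w => XvTop C w.1)) O := by
      letI : ∀ w : Vertex C, TopologicalSpace (Xv C w.1) := fun w => XvTop C w.1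
      rw [isOpen_sigma_iff]
      intro w
      by_cases hw : w = (⟨v, hv⟩ : Vertex C)
      · subst hw
        rw [Set.preimage_image_eq _ sigma_mk_injective]
        exact TopologicalSpace.isOpen_generateFrom_of_mem ⟨E, hEring, rfl⟩
      · rw [Set.preimage_image_sigmaMk_of_ne hw]
        exact isOpen_empty
    have hPO : (Sigma.mk (⟨v, hv⟩ : Vertex C) (⟨x, hx⟩ : Xv C v) : Xtotal C) ∈ O :=
      Set.mem_image_of_mem _ (show (⟨x, hx⟩ : Xv C v) ∈ B from hEUC)
    have hmeet : (O ∩ M).Nonempty := by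
      letI : TopologicalSpace (Xtotal C) := XtotalTop C
      have hbdx' : (Sigma.mk (⟨v, hv⟩ : Vertex C) (⟨x, hx⟩ : Xv C v) : Xtotal C) ∈
          closure M := hbdx
      exact mem_closure_iff.mp hbdx' O hOopen hPO
    obtain ⟨p, hpO, hpM⟩ := hmeet
    obtain ⟨q, hqB, rfl⟩ := hpO
    have hySS : q.1 ∈ lamStarStar C v := hpM
    obtain ⟨-, γ, hγ, hsubE⟩ := hqB
    obtain ⟨α, hαΔ, d, hdy, hdα⟩ :=
      crux C hfa hfin hex hySS ⟨γ, hγ⟩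
    obtain ⟨e, ⟨hed, heγ⟩, hey⟩ := hySS.2.1 d hdy γ hγ
    have heE : e ∈ E := hsubE ⟨hey, heγ⟩
    exact heE.2 (Set.mem_biUnion hαΔ (pTail_trans C hdα hed))
  · -- boundary covered ⇒ exhaustive
    intro hbd a hra
    set x₀ : Set Λ := {η | a ∈ pTail C η} with hx₀def
    have hax₀ : a ∈ x₀ := mem_pTail_self C a
    set S : Set (Set Λ) := {z | z ⊆ pRng C v ∧ pDirected C z ∧ x₀ ⊆ z} with hSdef
    have hx₀S : x₀ ∈ S := by
      refine ⟨fun η hη => ?_, fun p hp q hq => ⟨a, ⟨hp, hq⟩, hax₀⟩, subset_rfl⟩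
      show C.r η = v
      rw [← r_of_pTail C hη]
      exact hra
    have hchainS : ∀ c ⊆ S, IsChain (· ⊆ ·) c → c.Nonempty →
        ∃ ub ∈ S, ∀ s ∈ c, s ⊆ ub := by
      intro c hcS hchain hcne
      refine ⟨⋃₀ c, ⟨?_, ?_, ?_⟩, fun s hs => Set.subset_sUnion_of_mem hs⟩
      · rintro b ⟨s, hsc, hbs⟩
        exact (hcS hsc).1 hbs
      · rintro p ⟨s, hsc, hps⟩ q ⟨t, htc, hqt⟩
        rcases hchain.total hsc htc with hst | hts
        · obtain ⟨e, he, het⟩ := (hcS htc).2.1 p (hst hps) q hqt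
          exact ⟨e, he, Set.subset_sUnion_of_mem htc het⟩
        · obtain ⟨e, he, hes⟩ := (hcS hsc).2.1 p hps q (hts hqt)
          exact ⟨e, he, Set.subset_sUnion_of_mem hsc hes⟩
      · obtain ⟨s, hsc⟩ := hcne
        exact (hcS hsc).2.2.trans (Set.subset_sUnion_of_mem hsc)
    obtain ⟨y, hx₀y, hymax⟩ := zorn_subset_nonempty S hchainS x₀ hx₀S
    have hySS : y ∈ lamStarStar C v := by
      refine ⟨hymax.1.1, hymax.1.2.1, fun z hz1 hz2 hyz => ?_⟩
      exact Set.Subset.antisymm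
        (hymax.2 ⟨hz1, hz2, hymax.1.2.2.trans hyz⟩ hyz) hyz
    have hyStar : y ∈ lamStar C v :=
      ⟨⟨a, hx₀y hax₀⟩, hymax.1.1, hymax.1.2.1, hereditary_of_maximal C hySS⟩
    have hPbd : (Sigma.mk (⟨v, hv⟩ : Vertex C) (⟨y, hyStar⟩ : Xv C v) : Xtotal C) ∈
        boundarySet C := by
      letI : TopologicalSpace (Xtotal C) := XtotalTop C
      exact subset_closure
        (show ((Sigma.mk (⟨v, hv⟩ : Vertex C) (⟨y, hyStar⟩ : Xv C v) : Xtotal C)) ∈ M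
          from hySS)
    obtain ⟨β, hβΔ, hβy⟩ := hbd y hyStar hPbd
    obtain ⟨e, he, -⟩ := hymax.1.2.1 a (hx₀y hax₀) β hβy
    exact ⟨β, hβΔ, e, he⟩
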